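/- The function F̄(x) = 4/(2+x)^2 for 0 ≤ x < 1, F̄(x) = (2/27)·(7-x) for 1 ≤ x < 3, and F̄(x) = (2x(3+x)^2/729)·exp(3-x) for x ≥ 3 is a valid survival function (F̄(0)=1, continuous, nonincreasing, tending to 0), and its MRL function is e_F(x) = 2+x on [0,1), (7-x)/2 on [1,3), and 1 + 3/x on [3,∞). -/

import Mathlib

open MeasureTheory Set Filter Polynomial

lemma aux_exp_deriv (x : ℝ) : HasDerivAt (fun t : ℝ => Real.exp (3 - t)) (-Real.exp (3 - x)) x := by
  have h := (Real.hasDerivAt_exp (3 - x)).comp x ((hasDerivAt_id x).const_sub 3)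
  exact h.congr_deriv (by simp)

lemma aux_g_deriv (x : ℝ) : HasDerivAt (fun t : ℝ => 2*t*(3+t)^2/729 * Real.exp (3-t))
    (Real.exp (3-x) * ((3+x) * (3 - x^2)) * 2/729) x := by
  have hp : HasDerivAt (fun t : ℝ => 2*t*(3+t)^2/729)
      ((2*(3+x)^2 + 2*x*(2*(3+x)^1*1))/729) x := by
    have := (((hasDerivAt_id x).const_mul 2).mul (((hasDerivAt_id x).const_add 3).pow 2)).div_const 729
    simpa using this
  have h := hp.mul (aux_exp_deriv x)
  refine h.congr_deriv ?_
  ring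

lemma aux_G_deriv (x : ℝ) : HasDerivAt (fun t : ℝ => -(2*(t+3)^3/729 * Real.exp (3-t)))
    (2*x*(3+x)^2/729 * Real.exp (3-x)) x := by
  have hp : HasDerivAt (fun t : ℝ => 2*(t+3)^3/729)
      ((2*(3*(x+3)^2*1))/729) x := by
    have := ((((hasDerivAt_id x).add_const 3).pow 3).const_mul 2).div_const 729
    simpa using this
  have h := (hp.mul (aux_exp_deriv x)).neg
  refine h.congr_deriv ?_
  ring

lemma aux_g_tendsto : Tendsto (fun t : ℝ => 2*t*(3+t)^2/729 * Real.exp (3-t)) atTop (nhds 0) := by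
  have h := Polynomial.tendsto_div_exp_atTop (C (2*Real.exp 3/729) * X * (C 3 + X)^2)
  refine h.congr fun t => ?_
  have ht : Real.exp t ≠ 0 := (Real.exp_pos t).ne'
  simp only [Polynomial.eval_mul, Polynomial.eval_pow, Polynomial.eval_add, Polynomial.eval_C,
    Polynomial.eval_X, Real.exp_sub]
  field_simp

lemma aux_G_tendsto : Tendsto (fun t : ℝ => -(2*(t+3)^3/729 * Real.exp (3-t))) atTop (nhds 0) := by
  have h := Polynomial.tendsto_div_exp_atTop (C (-(2*Real.exp 3)/729) * (X + C 3)^3)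
  refine h.congr fun t => ?_
  have ht : Real.exp t ≠ 0 := (Real.exp_pos t).ne'
  simp only [Polynomial.eval_mul, Polynomial.eval_pow, Polynomial.eval_add, Polynomial.eval_C,
    Polynomial.eval_X, Real.exp_sub]
  field_simp

lemma aux_g_anti : AntitoneOn (fun t : ℝ => 2*t*(3+t)^2/729 * Real.exp (3-t)) (Ici (3:ℝ)) := by
  apply antitoneOn_of_deriv_nonpos (convex_Ici 3)
  · apply Continuous.continuousOn
    have : Continuous (fun t : ℝ => Real.exp (3 - t)) := Real.continuous_exp.comp (by continuity)
    continuity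
  · intro x hx
    exact (aux_g_deriv x).differentiableAt.differentiableWithinAt
  · intro x hx
    rw [interior_Ici] at hx
    rw [(aux_g_deriv x).deriv]
    have h1 : (0:ℝ) < 3 + x := by linarith [mem_Ioi.mp hx]
    have h2 : 3 - x^2 ≤ 0 := by nlinarith [mem_Ioi.mp hx]
    have h3 : 0 < Real.exp (3 - x) := Real.exp_pos _
    have h4 : Real.exp (3-x) * ((3 + x) * (3 - x ^ 2)) ≤ 0 :=
      mul_nonpos_of_nonneg_of_nonpos h3.le (mul_nonpos_of_nonneg_of_nonpos h1.le h2)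
    linarith

theorem example34_survival_and_mrl
    (Fbar eF : ℝ → ℝ)
    (hF : ∀ x, Fbar x =
      if x < 1 then 4 / (2 + x) ^ 2
      else if x < 3 then 2 / 27 * (7 - x)
      else 2 * x * (3 + x) ^ 2 / 729 * Real.exp (3 - x))
    (he : ∀ x, eF x =
      if x < 1 then 2 + x
      else if x < 3 then (7 - x) / 2
      else 1 + 3 / x) :
    Fbar 0 = 1 ∧ AntitoneOn Fbar (Ici 0) ∧ ContinuousOn Fbar (Ici 0) ∧
      Tendsto Fbar atTop (nhds 0) ∧
      (∀ x ≥ (0:ℝ), ∫ t in Ioi x, Fbar t = eF x * Fbar x) := by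
  -- basic piecewise descriptions, valid at the (matching) endpoints too
  have hgFbar : ∀ t : ℝ, 3 ≤ t → Fbar t = 2*t*(3+t)^2/729 * Real.exp (3-t) := by
    intro t ht
    rw [hF, if_neg (by linarith), if_neg (by linarith)]
  have hFbar_mid : ∀ t : ℝ, 1 ≤ t → t ≤ 3 → Fbar t = 2/27*(7-t) := by
    intro t h1 h3
    rw [hF, if_neg (by linarith)]
    by_cases h : t < 3
    · rw [if_pos h]
    · rw [if_neg h]
      have ht : t = 3 := le_antisymm h3 (not_lt.mp h)
      subst ht
      norm_num [Real.exp_zero]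
  have hFbar_low : ∀ t : ℝ, t ≤ 1 → Fbar t = 4/(2+t)^2 := by
    intro t h1
    rw [hF]
    by_cases h : t < 1
    · rw [if_pos h]
    · have ht : t = 1 := le_antisymm h1 (not_lt.mp h)
      subst ht
      rw [if_neg h, if_pos (by norm_num)]
      norm_num
  -- the tail integral beyond 3
  have tail : ∀ x : ℝ, 3 ≤ x → ∫ t in Ioi x, Fbar t = 2*(x+3)^3/729 * Real.exp (3-x) := by
    intro x hx
    rw [setIntegral_congr_fun measurableSet_Ioi
      (fun t ht => hgFbar t (hx.trans (le_of_lt ht)))]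
    have h := integral_Ioi_of_hasDerivAt_of_nonneg' (a := x) (fun t _ => aux_G_deriv t)
      (fun t ht => by
        have h0 : (0:ℝ) < t := lt_of_le_of_lt (by linarith) (mem_Ioi.mp ht)
        positivity) aux_G_tendsto
    rw [h]
    ring
  have int3 : IntegrableOn Fbar (Ioi 3) := by
    have h := integrableOn_Ioi_deriv_of_nonneg' (a := 3) (fun t _ => aux_G_deriv t)
      (fun t ht => by
        have h0 : (0:ℝ) < t := lt_trans (by norm_num) (mem_Ioi.mp ht)
        positivity) aux_G_tendsto
    exact h.congr_fun (fun t ht => (hgFbar t (le_of_lt ht)).symm) measurableSet_Ioi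
  have intMid : ∀ x : ℝ, 1 ≤ x → x ≤ 3 → IntegrableOn Fbar (Ioc x 3) := by
    intro x h1 h3
    have hc : IntegrableOn (fun t : ℝ => 2/27*(7-t)) (Ioc x 3) :=
      (Continuous.integrableOn_Ioc (by fun_prop))
    exact hc.congr_fun (fun t ht => (hFbar_mid t (h1.trans ht.1.le) ht.2).symm) measurableSet_Ioc
  have mid : ∀ x : ℝ, 1 ≤ x → x ≤ 3 → ∫ t in Ioi x, Fbar t = (7-x)^2/27 := by
    intro x h1 h3
    rw [← Ioc_union_Ioi_eq_Ioi h3,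
      setIntegral_union (Ioc_disjoint_Ioi le_rfl) measurableSet_Ioi (intMid x h1 h3) int3,
      tail 3 le_rfl]
    have hmid : ∫ t in Ioc x 3, Fbar t = ∫ t in x..3, 2/27*(7-t) := by
      rw [intervalIntegral.integral_of_le h3]
      exact setIntegral_congr_fun measurableSet_Ioc
        fun t ht => hFbar_mid t (h1.trans ht.1.le) ht.2
    rw [hmid, intervalIntegral.integral_eq_sub_of_hasDerivAt
      (f := fun t => 2/27*(7*t - t^2/2))
      (fun t _ => by
        have h := (((hasDerivAt_id t).const_mul 7).sub
          (((hasDerivAt_id t).pow 2).div_const 2)).const_mul (2/27)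
        refine h.congr_deriv ?_
        simp)
      ((Continuous.intervalIntegrable (by fun_prop) x 3))]
    have hexp : Real.exp (3 - (3:ℝ)) = 1 := by norm_num
    rw [hexp]
    ring
  have int1 : IntegrableOn Fbar (Ioi 1) := by
    rw [← Ioc_union_Ioi_eq_Ioi (by norm_num : (1:ℝ) ≤ 3)]
    exact (intMid 1 le_rfl (by norm_num)).union int3
  -- the five goals
  refine ⟨by rw [hF]; norm_num, ?_, ?_, ?_, ?_⟩
  · -- AntitoneOn
    have key_low : ∀ a : ℝ, 0 ≤ a → a ≤ 1 → 4/9 ≤ Fbar a := by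
      intro a ha h1
      rw [hFbar_low a h1, le_div_iff₀ (by positivity)]
      nlinarith
    have g3 : (2:ℝ)*3*(3+3)^2/729 * Real.exp (3-3) = 8/27 := by norm_num
    intro a ha b hb hab
    simp only [mem_Ici] at ha hb
    by_cases hb1 : b ≤ 1
    · rw [hFbar_low a (hab.trans hb1), hFbar_low b hb1,
        div_le_div_iff₀ (by positivity) (by positivity)]
      nlinarith
    push_neg at hb1
    by_cases hb3 : b ≤ 3
    · rw [hFbar_mid b hb1.le hb3]
      by_cases ha1 : a ≤ 1
      · have : 2/27*(7-b) ≤ 4/9 := by linarith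
        exact this.trans (key_low a ha ha1)
      · push_neg at ha1
        rw [hFbar_mid a ha1.le (hab.trans hb3)]
        linarith
    · push_neg at hb3
      rw [hgFbar b hb3.le]
      by_cases ha3 : a ≤ 3
      · have h1 : (fun t : ℝ => 2*t*(3+t)^2/729 * Real.exp (3-t)) b ≤
            (fun t : ℝ => 2*t*(3+t)^2/729 * Real.exp (3-t)) 3 :=
          aux_g_anti (self_mem_Ici) (mem_Ici.mpr hb3.le) hb3.le
        simp only at h1
        rw [g3] at h1
        refine h1.trans ?_
        by_cases ha1 : a ≤ 1
        · exact le_trans (by norm_num) (key_low a ha ha1)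
        · push_neg at ha1
          rw [hFbar_mid a ha1.le ha3]
          linarith
      · push_neg at ha3
        rw [hgFbar a ha3.le]
        exact aux_g_anti (mem_Ici.mpr ha3.le) (mem_Ici.mpr (ha3.le.trans hab)) hab
  · -- ContinuousOn
    have hc : Continuous (fun x : ℝ => if x ≤ 1 then 4/(2+max x 0)^2
        else if x ≤ 3 then 2/27*(7-x) else 2*x*(3+x)^2/729*Real.exp (3-x)) := by
      apply Continuous.if_le
      · apply Continuous.div continuous_const
        · fun_prop
        · intro x
          have : (0:ℝ) ≤ max x 0 := le_max_right _ _
          positivity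
      · apply Continuous.if_le
        · fun_prop
        · fun_prop
        · exact continuous_id
        · exact continuous_const
        · intro x hx
          subst hx
          norm_num
      · exact continuous_id
      · exact continuous_const
      · intro x hx
        subst hx
        norm_num
    have hEq : ∀ x : ℝ, 0 ≤ x → Fbar x = (if x ≤ 1 then 4/(2+max x 0)^2
        else if x ≤ 3 then 2/27*(7-x) else 2*x*(3+x)^2/729*Real.exp (3-x)) := by
      intro x hx
      rw [hF]
      by_cases h1 : x < 1
      · rw [if_pos h1, if_pos h1.le, max_eq_left hx]
      · rw [if_neg h1]
        push_neg at h1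
        by_cases h3 : x < 3
        · by_cases he1 : x ≤ 1
          · have hx1 : x = 1 := le_antisymm he1 h1
            subst hx1
            rw [if_pos h3, if_pos le_rfl]
            norm_num
          · rw [if_pos h3, if_neg he1, if_pos h3.le]
        · push_neg at h3
          rw [if_neg (not_lt.mpr h3), if_neg (by linarith : ¬ x ≤ 1)]
          by_cases he3 : x ≤ 3
          · have hx3 : x = 3 := le_antisymm he3 h3
            subst hx3
            rw [if_pos le_rfl]
            norm_num
          · rw [if_neg he3]
    exact hc.continuousOn.congr fun x hx => hEq x hx
  · -- Tendsto
    have hev : (fun t : ℝ => 2*t*(3+t)^2/729 * Real.exp (3-t)) =ᶠ[atTop] Fbar := by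
      filter_upwards [eventually_ge_atTop (3:ℝ)] with t ht using (hgFbar t ht).symm
    exact aux_g_tendsto.congr' hev
  · -- MRL
    intro x hx
    have hContLow : ∀ x : ℝ, 0 ≤ x → ContinuousOn (fun t : ℝ => 4/(2+t)^2) (Icc x 1) := by
      intro x hx
      apply ContinuousOn.div continuousOn_const (by fun_prop)
      intro t ht
      have h2 : (0:ℝ) < 2 + t := by
        have h1 : x ≤ t := ht.1
        linarith
      positivity
    rw [he]
    by_cases hx1 : x < 1
    · rw [if_pos hx1, hFbar_low x hx1.le,
        ← Ioc_union_Ioi_eq_Ioi hx1.le,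
        setIntegral_union (Ioc_disjoint_Ioi le_rfl) measurableSet_Ioi
          ((((hContLow x hx).integrableOn_Icc.mono_set Ioc_subset_Icc_self).congr_fun
            (fun t ht => (hFbar_low t ht.2).symm) measurableSet_Ioc)) int1,
        mid 1 le_rfl (by norm_num)]
      have hlow : ∫ t in Ioc x 1, Fbar t = ∫ t in x..1, 4/(2+t)^2 := by
        rw [intervalIntegral.integral_of_le hx1.le]
        exact setIntegral_congr_fun measurableSet_Ioc fun t ht => hFbar_low t ht.2
      rw [hlow, intervalIntegral.integral_eq_sub_of_hasDerivAt
        (f := fun t => -4 * (2+t)⁻¹)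
        (fun t ht => by
          rw [uIcc_of_le hx1.le] at ht
          have h0 : (0:ℝ) < 2 + t := by linarith [ht.1, hx]
          have h := (((hasDerivAt_id t).const_add 2).inv h0.ne').const_mul (-4)
          refine h.congr_deriv ?_
          simp only [id]
          ring)
        (by
          apply ContinuousOn.intervalIntegrable
          rw [uIcc_of_le hx1.le]
          exact hContLow x hx)]
      have h2x : (0:ℝ) < 2 + x := by linarith
      field_simp
      ring
    · rw [if_neg hx1]
      push_neg at hx1
      by_cases hx3 : x < 3
      · rw [if_pos hx3, hFbar_mid x hx1 hx3.le, mid x hx1 hx3.le]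
        ring
      · push_neg at hx3
        rw [if_neg (not_lt.mpr hx3), hgFbar x hx3, tail x hx3]
        have hx0 : (0:ℝ) < x := by linarith
        field_simp
        ring
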